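/- arXiv:2403.05348 — 2 statements merged into one kernel-verified Lean document; each statement's English description precedes it below -/
import Mathlib

section
/- Higher contiguity distance is an invariant of strong homotopy type: if β₁,...,βₙ : K' → K are right strong equivalences, α₁,...,αₙ : L → L' are left strong equivalences, and simplicial maps φ₁,...,φₙ : K → L, ψ₁,...,ψₙ : K' → L' satisfy αⱼ∘φⱼ∘βⱼ ∼ ψⱼ for each j, then SD(φ₁,...,φₙ) = SD(ψ₁,...,ψₙ). -/
/-- An abstract simplicial complex on vertex type `V`. -/
structure ASC (V : Type) where
  faces : Set (Finset V)
  nonempty_of_mem : ∀ {s : Finset V}, s ∈ faces → s.Nonempty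
  down_closed : ∀ {s t : Finset V}, s ∈ faces → t ⊆ s → t.Nonempty → t ∈ faces

/-- A simplicial map between abstract simplicial complexes. -/
structure SMap {V W : Type} [DecidableEq W] (K : ASC V) (L : ASC W) where
  toFun : V → W
  maps_faces : ∀ {s : Finset V}, s ∈ K.faces → s.image toFun ∈ L.faces

namespace SMap

variable {V W U : Type} [DecidableEq V] [DecidableEq W] [DecidableEq U]
  {K : ASC V} {L : ASC W} {M : ASC U}

/-- The identity simplicial map. -/
def id (K : ASC V) : SMap K K :=
  ⟨fun v => v, by intro s hs; simpa using hs⟩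

/-- Composition of simplicial maps. -/
def comp (ψ : SMap L M) (φ : SMap K L) : SMap K M :=
  ⟨ψ.toFun ∘ φ.toFun, by
    intro s hs
    have h := ψ.maps_faces (φ.maps_faces hs)
    simpa [Finset.image_image] using h⟩

end SMap

/-- Two simplicial maps are contiguous if the images of each simplex under the two
maps together span a simplex. -/
def Contiguous {V W : Type} [DecidableEq W] {K : ASC V} {L : ASC W}
    (φ ψ : SMap K L) : Prop :=
  ∀ {s : Finset V}, s ∈ K.faces → (s.image φ.toFun ∪ s.image ψ.toFun) ∈ L.faces

/-- Being in the same contiguity class: the reflexive-transitive closure of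
contiguity (`φ ∼ ψ`). -/
def CClass {V W : Type} [DecidableEq W] {K : ASC V} {L : ASC W}
    (φ ψ : SMap K L) : Prop :=
  Relation.ReflTransGen Contiguous φ ψ

/-- The type of subcomplexes of `K`. -/
def ASC.Sub {V : Type} (K : ASC V) : Type :=
  {Ω : ASC V // Ω.faces ⊆ K.faces}

/-- Restriction of a simplicial map to a subcomplex of the domain. -/
def SMap.restrict {V W : Type} [DecidableEq W] {K : ASC V} {L : ASC W}
    (φ : SMap K L) (Ω : K.Sub) : SMap Ω.1 L :=
  ⟨φ.toFun, by intro s hs; exact φ.maps_faces (Ω.2 hs)⟩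

/-- `SDle φ k` : the family `φ` has contiguity distance at most `k`, witnessed by a
cover of `K` by `k+1` subcomplexes on each of which all the maps restrict into a
single contiguity class. -/
def SDle {V W : Type} [DecidableEq W] {K : ASC V} {L : ASC W} {n : ℕ}
    (φ : Fin n → SMap K L) (k : ℕ) : Prop :=
  ∃ Ω : Fin (k + 1) → K.Sub,
    (∀ s ∈ K.faces, ∃ j, s ∈ (Ω j).1.faces) ∧
    ∀ j i i', CClass ((φ i).restrict (Ω j)) ((φ i').restrict (Ω j))

/-- The `n`-th contiguity distance `SD(φ₁,…,φₙ)`, valued in `ℕ∞`. -/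
noncomputable def SD {V W : Type} [DecidableEq W] {K : ASC V} {L : ASC W} {n : ℕ}
    (φ : Fin n → SMap K L) : ℕ∞ :=
  sInf {m : ℕ∞ | ∃ k : ℕ, m = (k : ℕ∞) ∧ SDle φ k}

/-- `v` is a vertex of `K`. -/
def ASC.isVertex {V : Type} (K : ASC V) (v : V) : Prop :=
  ({v} : Finset V) ∈ K.faces

/-- The constant simplicial map at a vertex `v` of `L`. -/
def constMap {V W : Type} [DecidableEq W] (K : ASC V) (L : ASC W) {v : W}
    (hv : L.isVertex v) : SMap K L :=
  ⟨fun _ => v, by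
    intro s hs
    rw [Finset.image_const (K.nonempty_of_mem hs) v]
    exact hv⟩

/-- The inclusion of a subcomplex. -/
def incl {V : Type} [DecidableEq V] {K : ASC V} (Ω : K.Sub) : SMap Ω.1 K :=
  ⟨fun x => x, by intro s hs; simpa using Ω.2 hs⟩

/-- A subcomplex is categorical if its inclusion is in the same contiguity class
as a constant map. -/
def Categorical {V : Type} [DecidableEq V] {K : ASC V} (Ω : K.Sub) : Prop :=
  ∃ v : V, ∃ hv : K.isVertex v, CClass (incl Ω) (constMap Ω.1 K hv)

/-- `scatle K k` : `K` is covered by `k+1` categorical subcomplexes. -/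
def scatle {V : Type} [DecidableEq V] (K : ASC V) (k : ℕ) : Prop :=
  ∃ Ω : Fin (k + 1) → K.Sub,
    (∀ s ∈ K.faces, ∃ j, s ∈ (Ω j).1.faces) ∧ ∀ j, Categorical (Ω j)

/-- The simplicial Lusternik–Schnirelmann category, valued in `ℕ∞`. -/
noncomputable def scat {V : Type} [DecidableEq V] (K : ASC V) : ℕ∞ :=
  sInf {m : ℕ∞ | ∃ k : ℕ, m = (k : ℕ∞) ∧ scatle K k}

/-- The `n`-fold categorical product `Kⁿ`. -/
def ASC.prodPow {V : Type} [DecidableEq V] (K : ASC V) (n : ℕ) : ASC (Fin n → V) where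
  faces := {s | s.Nonempty ∧ ∀ i : Fin n, s.image (fun f => f i) ∈ K.faces}
  nonempty_of_mem := fun h => h.1
  down_closed := by
    intro s t hs hts ht
    refine ⟨ht, fun i => ?_⟩
    exact K.down_closed (hs.2 i) (Finset.image_subset_image (f := fun f => f i) hts)
      (ht.image _)

/-- Projection to the `i`-th factor of the categorical product. -/
def proj {V : Type} [DecidableEq V] (K : ASC V) (n : ℕ) (i : Fin n) :
    SMap (K.prodPow n) K :=
  ⟨fun f => f i, by intro s hs; exact hs.2 i⟩

/-- The diagonal simplicial map `K → Kⁿ`. -/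
def diag {V : Type} [DecidableEq V] (K : ASC V) (n : ℕ) : SMap K (K.prodPow n) :=
  ⟨fun v _ => v, by
    intro s hs
    refine ⟨(K.nonempty_of_mem hs).image _, fun i => ?_⟩
    have h : (s.image fun v (_ : Fin n) => v).image (fun f => f i) = s := by
      rw [Finset.image_image]
      exact Finset.image_id'
    rw [h]; exact hs⟩

/-- A subcomplex `Ω ⊆ Kⁿ` is `n`-Farber if the diagonal admits a section over `Ω`
up to contiguity class. -/
def IsFarber {V : Type} [DecidableEq V] {K : ASC V} {n : ℕ}
    (Ω : (K.prodPow n).Sub) : Prop :=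
  ∃ σ : SMap Ω.1 K, CClass ((diag K n).comp σ) (incl Ω)

/-- `dTCle K n k` : `Kⁿ` is covered by `k+1` `n`-Farber subcomplexes. -/
def dTCle {V : Type} [DecidableEq V] (K : ASC V) (n k : ℕ) : Prop :=
  ∃ Ω : Fin (k + 1) → (K.prodPow n).Sub,
    (∀ s ∈ (K.prodPow n).faces, ∃ j, s ∈ (Ω j).1.faces) ∧ ∀ j, IsFarber (Ω j)

/-- The `n`-th discrete topological complexity, valued in `ℕ∞`. -/
noncomputable def dTC {V : Type} [DecidableEq V] (K : ASC V) (n : ℕ) : ℕ∞ :=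
  sInf {m : ℕ∞ | ∃ k : ℕ, m = (k : ℕ∞) ∧ dTCle K n k}

/-- `K` is edge-path connected: any two vertices are joined by a finite edge path. -/
def ASC.EPConn {V : Type} [DecidableEq V] (K : ASC V) : Prop :=
  ∀ u v : V, K.isVertex u → K.isVertex v →
    Relation.ReflTransGen (fun a b => ({a, b} : Finset V) ∈ K.faces) u v

/-- `K` is strongly collapsible: the identity is in the same contiguity class as a
constant map. -/
def StronglyCollapsible {V : Type} [DecidableEq V] (K : ASC V) : Prop :=
  ∃ v : V, ∃ hv : K.isVertex v, CClass (SMap.id K) (constMap K K hv)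

/-- `μ` is a right strong equivalence: it has a right strong homotopy inverse. -/
def RightStrongEq {V W : Type} [DecidableEq V] [DecidableEq W]
    {K : ASC V} {L : ASC W} (μ : SMap K L) : Prop :=
  ∃ α : SMap L K, CClass (μ.comp α) (SMap.id L)

/-- `μ` is a left strong equivalence: it has a left strong homotopy inverse. -/
def LeftStrongEq {V W : Type} [DecidableEq V] [DecidableEq W]
    {K : ASC V} {L : ASC W} (μ : SMap K L) : Prop :=
  ∃ β : SMap L K, CClass (β.comp μ) (SMap.id K)

/-- The barycentric subdivision of `K`: vertices are the simplices of `K`, and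
simplices are chains of simplices of `K`. -/
def ASC.sd {V : Type} (K : ASC V) : ASC (Finset V) where
  faces := {S | S.Nonempty ∧ (∀ σ ∈ S, σ ∈ K.faces) ∧
    ∀ σ ∈ S, ∀ τ ∈ S, σ ⊆ τ ∨ τ ⊆ σ}
  nonempty_of_mem := fun h => h.1
  down_closed := fun hS hTS hT =>
    ⟨hT, fun σ hσ => hS.2.1 σ (hTS hσ), fun σ hσ τ hτ => hS.2.2 σ (hTS hσ) τ (hTS hτ)⟩

/-- The induced simplicial map on barycentric subdivisions. -/
def SMap.sd {V W : Type} [DecidableEq V] [DecidableEq W] {K : ASC V} {L : ASC W}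
    (φ : SMap K L) : SMap K.sd L.sd :=
  ⟨fun σ => σ.image φ.toFun, by
    intro S hS
    refine ⟨hS.1.image _, ?_, ?_⟩
    · intro τ hτ
      simp only [Finset.mem_image] at hτ
      obtain ⟨σ, hσ, rfl⟩ := hτ
      exact φ.maps_faces (hS.2.1 σ hσ)
    · intro τ₁ h₁ τ₂ h₂
      simp only [Finset.mem_image] at h₁ h₂
      obtain ⟨σ₁, hσ₁, rfl⟩ := h₁
      obtain ⟨σ₂, hσ₂, rfl⟩ := h₂
      rcases hS.2.2 σ₁ hσ₁ σ₂ hσ₂ with h | h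
      · exact Or.inl (Finset.image_subset_image h)
      · exact Or.inr (Finset.image_subset_image h)⟩


section Aux

variable {V V' W W' U : Type} [DecidableEq V] [DecidableEq V'] [DecidableEq W]
  [DecidableEq W'] [DecidableEq U]

theorem SMap.ext' {K : ASC V} {L : ASC W} {φ ψ : SMap K L}
    (h : φ.toFun = ψ.toFun) : φ = ψ := by
  cases φ; cases ψ; cases h; rfl

theorem Contiguous.symm' {K : ASC V} {L : ASC W} {φ ψ : SMap K L}
    (h : Contiguous φ ψ) : Contiguous ψ φ := by
  intro s hs
  have := h hs
  rwa [Finset.union_comm] at this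

theorem CClass.refl' {K : ASC V} {L : ASC W} (φ : SMap K L) : CClass φ φ :=
  Relation.ReflTransGen.refl

theorem CClass.symm' {K : ASC V} {L : ASC W} {φ ψ : SMap K L}
    (h : CClass φ ψ) : CClass ψ φ :=
  by
  induction h with
  | refl => exact Relation.ReflTransGen.refl
  | tail _ hc ih => exact Relation.ReflTransGen.head (Contiguous.symm' hc) ih

theorem CClass.trans' {K : ASC V} {L : ASC W} {φ ψ θ : SMap K L}
    (h : CClass φ ψ) (h' : CClass ψ θ) : CClass φ θ :=
  Relation.ReflTransGen.trans h h'

theorem CClass.comp_left {K : ASC V} {L : ASC W} {M : ASC U}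
    (θ : SMap L M) {φ ψ : SMap K L} (h : CClass φ ψ) :
    CClass (θ.comp φ) (θ.comp ψ) := by
  refine Relation.ReflTransGen.lift (fun f : SMap K L => θ.comp f) (fun f g hc => ?_) _ _ h
  intro s hs
  have := θ.maps_faces (hc hs)
  simpa [SMap.comp, Finset.image_union, Finset.image_image, Function.comp] using this

theorem CClass.comp_right {K : ASC V} {L : ASC W} {M : ASC U}
    (θ : SMap M K) {φ ψ : SMap K L} (h : CClass φ ψ) :
    CClass (φ.comp θ) (ψ.comp θ) := by
  refine Relation.ReflTransGen.lift (fun f : SMap K L => f.comp θ) (fun f g hc => ?_) _ _ h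
  intro s hs
  have := hc (θ.maps_faces hs)
  simpa [SMap.comp, Finset.image_image, Function.comp] using this

theorem CClass.comp_congr {K : ASC V} {L : ASC W} {M : ASC U}
    {θ θ' : SMap L M} {φ φ' : SMap K L} (hθ : CClass θ θ') (hφ : CClass φ φ') :
    CClass (θ.comp φ) (θ'.comp φ') :=
  CClass.trans' (CClass.comp_left θ hφ) (CClass.comp_right φ' hθ)

theorem CClass.restrict' {K : ASC V} {L : ASC W} {φ ψ : SMap K L}
    (h : CClass φ ψ) (Ω : K.Sub) :
    CClass (φ.restrict Ω) (ψ.restrict Ω) := by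
  refine Relation.ReflTransGen.lift (fun f : SMap K L => f.restrict Ω) (fun f g hc => ?_) _ _ h
  intro s hs
  exact hc (Ω.2 hs)

/-- The pullback of a subcomplex of the codomain along a simplicial map. -/
def pullSub {K' : ASC V'} {K : ASC V} (b : SMap K' K) (Ω : K.Sub) : K'.Sub :=
  ⟨⟨{s | s ∈ K'.faces ∧ s.image b.toFun ∈ Ω.1.faces},
    by intro s h; exact K'.nonempty_of_mem h.1,
    by
      intro s t hs hts ht
      exact ⟨K'.down_closed hs.1 hts ht,
        Ω.1.down_closed hs.2 (Finset.image_subset_image hts) (ht.image _)⟩⟩,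
    fun _ h => h.1⟩

/-- The map from the pullback subcomplex to the original subcomplex. -/
def pullMap {K' : ASC V'} {K : ASC V} (b : SMap K' K) (Ω : K.Sub) :
    SMap (pullSub b Ω).1 Ω.1 :=
  ⟨b.toFun, by intro s hs; exact hs.2⟩

theorem SDle_transfer {K : ASC V} {K' : ASC V'} {L : ASC W} {L' : ASC W'} {n : ℕ}
    (b : SMap K' K) (a : SMap L L')
    (φ : Fin n → SMap K L) (ψ : Fin n → SMap K' L')
    (h : ∀ j, CClass (a.comp ((φ j).comp b)) (ψ j)) {k : ℕ}
    (hk : SDle φ k) : SDle ψ k := by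
  obtain ⟨Ω, hcov, hcl⟩ := hk
  refine ⟨fun j => pullSub b (Ω j), ?_, ?_⟩
  · intro s hs
    obtain ⟨j, hj⟩ := hcov (s.image b.toFun) (b.maps_faces hs)
    exact ⟨j, hs, hj⟩
  · intro j i i'
    have key : ∀ i₀ : Fin n,
        (a.comp ((φ i₀).comp b)).restrict (pullSub b (Ω j)) =
        a.comp (((φ i₀).restrict (Ω j)).comp (pullMap b (Ω j))) :=
      fun i₀ => SMap.ext' rfl
    have h1 : CClass ((ψ i).restrict (pullSub b (Ω j)))
        ((a.comp ((φ i).comp b)).restrict (pullSub b (Ω j))) :=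
      CClass.restrict' (CClass.symm' (h i)) _
    have h2 : CClass ((a.comp ((φ i').comp b)).restrict (pullSub b (Ω j)))
        ((ψ i').restrict (pullSub b (Ω j))) :=
      CClass.restrict' (h i') _
    have h3 : CClass (a.comp (((φ i).restrict (Ω j)).comp (pullMap b (Ω j))))
        (a.comp (((φ i').restrict (Ω j)).comp (pullMap b (Ω j)))) :=
      CClass.comp_left a (CClass.comp_right _ (hcl j i i'))
    rw [key i] at h1
    rw [key i'] at h2
    exact CClass.trans' h1 (CClass.trans' h3 h2)

theorem SD_le_of_transfer {K : ASC V} {K' : ASC V'} {L : ASC W} {L' : ASC W'} {n : ℕ}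
    (φ : Fin n → SMap K L) (ψ : Fin n → SMap K' L')
    (h : ∀ k : ℕ, SDle φ k → SDle ψ k) : SD ψ ≤ SD φ := by
  apply sInf_le_sInf
  rintro m ⟨k, hm, hk⟩
  exact ⟨k, hm, h k hk⟩

end Aux

/-- higher contiguity distance is an invariant of strong homotopy
type. -/
theorem SD_strong_homotopy_invariant {V V' W W' : Type}
    [DecidableEq V] [DecidableEq V'] [DecidableEq W] [DecidableEq W']
    {K : ASC V} {K' : ASC V'} {L : ASC W} {L' : ASC W'} {n : ℕ}
    (β : Fin n → SMap K' K) (hβ : ∀ j, RightStrongEq (β j))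
    (hββ : ∀ j j', CClass (β j) (β j'))
    (α : Fin n → SMap L L') (hα : ∀ j, LeftStrongEq (α j))
    (hαα : ∀ j j', CClass (α j) (α j'))
    (φ : Fin n → SMap K L) (ψ : Fin n → SMap K' L')
    (hcomm : ∀ j, CClass ((α j).comp ((φ j).comp (β j))) (ψ j)) :
    SD φ = SD ψ := by
  rcases n with _ | m
  · -- trivial case: no maps, both distances are 0
    have hz : ∀ {A B : Type} [DecidableEq A] [DecidableEq B] (X : ASC A) (Y : ASC B)
        (χ : Fin 0 → SMap X Y), SD χ = 0 := by
      intro A B _ _ X Y χ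
      refine le_antisymm ?_ zero_le
      refine sInf_le ⟨0, rfl, ⟨fun _ => ⟨X, fun _ h => h⟩, fun s hs => ⟨0, hs⟩,
        fun j i => i.elim0⟩⟩
    rw [hz K L φ, hz K' L' ψ]
  · obtain ⟨b', hb'⟩ := hβ 0
    obtain ⟨a', ha'⟩ := hα 0
    -- forward: ψ_j ∼ α₀ ∘ φ_j ∘ β₀
    have h1 : ∀ j, CClass ((α 0).comp ((φ j).comp (β 0))) (ψ j) := by
      intro j
      refine CClass.trans' ?_ (hcomm j)
      exact CClass.comp_congr (hαα 0 j) (CClass.comp_congr (CClass.refl' _) (hββ 0 j))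
    -- reverse: φ_j ∼ a' ∘ ψ_j ∘ b'
    have h2 : ∀ j, CClass (a'.comp ((ψ j).comp b')) (φ j) := by
      intro j
      have s1 : CClass (a'.comp ((ψ j).comp b'))
          (a'.comp ((((α j).comp ((φ j).comp (β j)))).comp b')) :=
        CClass.comp_left a' (CClass.comp_right b' (CClass.symm' (hcomm j)))
      have s2 : CClass (a'.comp ((((α j).comp ((φ j).comp (β j)))).comp b'))
          (a'.comp ((((α 0).comp ((φ j).comp (β 0)))).comp b')) :=
        CClass.comp_left a' (CClass.comp_right b'
          (CClass.comp_congr (hαα j 0)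
            (CClass.comp_congr (CClass.refl' _) (hββ j 0))))
      have e : a'.comp ((((α 0).comp ((φ j).comp (β 0)))).comp b') =
          (a'.comp (α 0)).comp ((φ j).comp ((β 0).comp b')) := SMap.ext' rfl
      have s3 : CClass ((a'.comp (α 0)).comp ((φ j).comp ((β 0).comp b')))
          ((SMap.id L).comp ((φ j).comp (SMap.id K))) :=
        CClass.comp_congr ha' (CClass.comp_congr (CClass.refl' _) hb')
      have e2 : (SMap.id L).comp ((φ j).comp (SMap.id K)) = φ j := SMap.ext' rfl
      rw [e2] at s3
      rw [e] at s2
      exact CClass.trans' s1 (CClass.trans' s2 s3)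
    refine le_antisymm ?_ ?_
    · exact SD_le_of_transfer ψ φ (fun k hk => SDle_transfer b' a' ψ φ h2 hk)
    · exact SD_le_of_transfer φ ψ (fun k hk => SDle_transfer (β 0) (α 0) φ ψ h1 hk)
end

section
/- Let K be an edge-path connected simplicial complex, v₀ a vertex of K, and for j = 1,...,n let i_j : K^{n−1} → Kⁿ be the simplicial map inserting v₀ in the j-th coordinate: i_j(σ₁,...,σ_{n−1}) = (σ₁,...,σ_{j−1}, v₀, σ_j,...,σ_{n−1}). Then scat(K^{n−1}) = SD(i₁,...,iₙ). -/
/-- The simplicial map `K^n → K^{n+1}` inserting the vertex `v₀` in the `j`-th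
coordinate. -/
def insMap {V : Type} [DecidableEq V] (K : ASC V) (n : ℕ) {v₀ : V}
    (hv : K.isVertex v₀) (j : Fin (n + 1)) :
    SMap (K.prodPow n) (K.prodPow (n + 1)) :=
  ⟨fun f => (j.insertNth v₀ f : Fin (n + 1) → V), by
    intro s hs
    refine ⟨hs.1.image _, fun i => ?_⟩
    rw [Finset.image_image]
    by_cases h : i = j
    · subst h
      have heq : ((fun g : Fin (n + 1) → V => g i) ∘
          fun f : Fin n → V => (i.insertNth v₀ f : Fin (n + 1) → V))
          = fun _ : Fin n → V => v₀ := by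
        funext f; simp
      rw [heq, Finset.image_const hs.1 v₀]
      exact hv
    · obtain ⟨k, rfl⟩ := Fin.exists_succAbove_eq h
      have heq : ((fun g : Fin (n + 1) → V => g (j.succAbove k)) ∘
          fun f : Fin n → V => (j.insertNth v₀ f : Fin (n + 1) → V))
          = fun f : Fin n → V => f k := by
        funext f; simp
      rw [heq]
      exact hs.2 k⟩

section Helper

variable {V W U X : Type} [DecidableEq V] [DecidableEq W] [DecidableEq U]
  {K : ASC V} {L : ASC W} {M : ASC U}

lemma smap_ext {φ ψ : SMap K L} (h : φ.toFun = ψ.toFun) : φ = ψ := by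
  cases φ; cases ψ; simp_all

lemma contiguous_symm {φ ψ : SMap K L} (h : Contiguous φ ψ) : Contiguous ψ φ := by
  intro s hs
  rw [Finset.union_comm]
  exact h hs

lemma cclass_symm {φ ψ : SMap K L} (h : CClass φ ψ) : CClass ψ φ := by
  induction h with
  | refl => exact Relation.ReflTransGen.refl
  | tail _ hedge ih => exact Relation.ReflTransGen.head (contiguous_symm hedge) ih

lemma contiguous_comp_left (μ : SMap L M) {φ ψ : SMap K L} (h : Contiguous φ ψ) :
    Contiguous (μ.comp φ) (μ.comp ψ) := by
  intro s hs
  have h2 := μ.maps_faces (h hs)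
  simpa [SMap.comp, Finset.image_union, Finset.image_image] using h2

lemma cclass_comp_left (μ : SMap L M) {φ ψ : SMap K L} (h : CClass φ ψ) :
    CClass (μ.comp φ) (μ.comp ψ) :=
  Relation.ReflTransGen.lift (fun χ => μ.comp χ)
    (fun a b hc => show Contiguous (μ.comp a) (μ.comp b) from contiguous_comp_left μ hc) _ _ h

/-- Moving one coordinate along an edge path of `K` gives an edge path in the
product. -/
lemma prod_path_update (m : ℕ) (a : Fin m → V)
    (ha : ∀ k, ({a k} : Finset V) ∈ K.faces) (i : Fin m) (v : V)
    (hp : Relation.ReflTransGen (fun x y => ({x, y} : Finset V) ∈ K.faces) (a i) v) :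
    Relation.ReflTransGen
      (fun f g => ({f, g} : Finset (Fin m → V)) ∈ (K.prodPow m).faces)
      a (Function.update a i v) := by
  induction hp with
  | refl => simpa [Function.update_eq_self] using Relation.ReflTransGen.refl
  | tail hpath hedge ih =>
    rename_i c d
    refine ih.tail ?_
    refine ⟨⟨Function.update a i c, by simp⟩, fun k => ?_⟩
    by_cases hk : k = i
    · subst hk
      have : (({Function.update a k c, Function.update a k d} : Finset (Fin m → V)).image
          fun f => f k) = {c, d} := by
        simp [Finset.image_insert]
      rw [this]; exact hedge
    · have : (({Function.update a i c, Function.update a i d} : Finset (Fin m → V)).image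
          fun f => f k) = {a k} := by
        simp [Finset.image_insert, Function.update_of_ne hk]
      rw [this]; exact ha k

/-- Any two vertices of the product are joined by an edge path, provided `K` is
edge-path connected. -/
lemma prod_path (hK : K.EPConn) (m : ℕ) (a b : Fin m → V)
    (ha : ∀ k, ({a k} : Finset V) ∈ K.faces) (hb : ∀ k, ({b k} : Finset V) ∈ K.faces) :
    Relation.ReflTransGen
      (fun f g => ({f, g} : Finset (Fin m → V)) ∈ (K.prodPow m).faces) a b := by
  suffices h : ∀ s : Finset (Fin m), ∀ a : Fin m → V,
      (∀ k, ({a k} : Finset V) ∈ K.faces) → (∀ k ∉ s, a k = b k) →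
      Relation.ReflTransGen
        (fun f g => ({f, g} : Finset (Fin m → V)) ∈ (K.prodPow m).faces) a b by
    exact h Finset.univ a ha (fun k hk => absurd (Finset.mem_univ k) hk)
  intro s
  induction s using Finset.induction with
  | empty =>
    intro a _ hagree
    have : a = b := funext fun k => hagree k (by simp)
    exact this ▸ Relation.ReflTransGen.refl
  | insert i s hni ih =>
    intro a ha hagree
    have h1 := prod_path_update m a ha i (b i) (hK (a i) (b i) (ha i) (hb i))
    refine h1.trans (ih (Function.update a i (b i)) ?_ ?_)
    · intro k
      by_cases hk : k = i
      · subst hk; simpa using hb k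
      · simpa [Function.update_of_ne hk] using ha k
    · intro k hk
      by_cases hki : k = i
      · subst hki; simp
      · rw [Function.update_of_ne hki]
        exact hagree k (by simp [hki, hk])

/-- Constant maps at edge-path connected vertices are in the same contiguity
class. -/
lemma cclass_const {X : Type} (P : ASC X) {m : ℕ} {a b : Fin m → V}
    (hp : Relation.ReflTransGen
      (fun f g => ({f, g} : Finset (Fin m → V)) ∈ (K.prodPow m).faces) a b)
    (ha : (K.prodPow m).isVertex a) (hb : (K.prodPow m).isVertex b) :
    CClass (constMap P (K.prodPow m) ha) (constMap P (K.prodPow m) hb) := by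
  induction hp with
  | refl => exact Relation.ReflTransGen.refl
  | tail hpath hedge ih =>
    rename_i c d
    have hc : (K.prodPow m).isVertex c :=
      (K.prodPow m).down_closed hedge (by simp) (Finset.singleton_nonempty c)
    refine (ih hc).tail ?_
    intro s hs
    have hne := P.nonempty_of_mem hs
    have : (s.image (constMap P (K.prodPow m) hc).toFun ∪
        s.image (constMap P (K.prodPow m) hb).toFun) = {c, d} := by
      show (s.image (fun _ => c) ∪ s.image (fun _ => d)) = _
      rw [Finset.image_const hne, Finset.image_const hne]
      rfl
    rw [this]; exact hedge

end Helper

section MainProof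

variable {V : Type} [DecidableEq V]

/-- The map `Kⁿ → Kⁿ` replacing the first `m` coordinates by `v₀`. -/
def repMap (K : ASC V) (n : ℕ) {v₀ : V} (hv : K.isVertex v₀) (m : ℕ) :
    SMap (K.prodPow n) (K.prodPow n) :=
  ⟨fun f k => if (k : ℕ) < m then v₀ else f k, by
    intro s hs
    refine ⟨hs.1.image _, fun i => ?_⟩
    rw [Finset.image_image]
    by_cases h : (i : ℕ) < m
    · have : ((fun g : Fin n → V => g i) ∘ fun f k => if (k : ℕ) < m then v₀ else f k)
          = fun _ : Fin n → V => v₀ := by funext f; simp [h]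
      rw [this, Finset.image_const hs.1]
      exact hv
    · have : ((fun g : Fin n → V => g i) ∘ fun f k => if (k : ℕ) < m then v₀ else f k)
          = fun f : Fin n → V => f i := by funext f; simp [h]
      rw [this]
      exact hs.2 i⟩

/-- The auxiliary map `K^{n+1} → Kⁿ` deleting coordinate `j+1` and replacing the
first `j` coordinates by `v₀`. -/
def delMap (K : ASC V) (n : ℕ) {v₀ : V} (hv : K.isVertex v₀) (j : Fin n) :
    SMap (K.prodPow (n + 1)) (K.prodPow n) :=
  ⟨fun g k => if (k : ℕ) < (j : ℕ) then v₀ else g (j.succ.succAbove k), by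
    intro s hs
    refine ⟨hs.1.image _, fun i => ?_⟩
    rw [Finset.image_image]
    by_cases h : (i : ℕ) < (j : ℕ)
    · have : ((fun g : Fin n → V => g i) ∘
          fun g : Fin (n+1) → V => fun k => if (k : ℕ) < (j : ℕ) then v₀ else g (j.succ.succAbove k))
          = fun _ : Fin (n+1) → V => v₀ := by
        funext g
        show (if (i : ℕ) < (j : ℕ) then v₀ else g (j.succ.succAbove i)) = v₀
        rw [if_pos h]
      rw [this, Finset.image_const hs.1]
      exact hv
    · have : ((fun g : Fin n → V => g i) ∘
          fun g : Fin (n+1) → V => fun k => if (k : ℕ) < (j : ℕ) then v₀ else g (j.succ.succAbove k))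
          = fun g : Fin (n+1) → V => g (j.succ.succAbove i) := by
        funext g
        show (if (i : ℕ) < (j : ℕ) then v₀ else g (j.succ.succAbove i)) = _
        rw [if_neg h]
      rw [this]
      exact hs.2 (j.succ.succAbove i)⟩

lemma delMap_comp_succ (K : ASC V) (n : ℕ) {v₀ : V} (hv : K.isVertex v₀) (j : Fin n) :
    (delMap K n hv j).toFun ∘ (insMap K n hv j.succ).toFun
      = (repMap K n hv (j : ℕ)).toFun := by
  funext f k
  show (if (k : ℕ) < (j : ℕ) then v₀ else (j.succ.insertNth v₀ f : Fin (n+1) → V) (j.succ.succAbove k))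
    = (if (k : ℕ) < (j : ℕ) then v₀ else f k)
  by_cases h : (k : ℕ) < (j : ℕ)
  · simp [h]
  · simp [h, Fin.insertNth_apply_succAbove]

lemma delMap_comp_castSucc (K : ASC V) (n : ℕ) {v₀ : V} (hv : K.isVertex v₀) (j : Fin n) :
    (delMap K n hv j).toFun ∘ (insMap K n hv j.castSucc).toFun
      = (repMap K n hv ((j : ℕ) + 1)).toFun := by
  funext f k
  show (if (k : ℕ) < (j : ℕ) then v₀ else (j.castSucc.insertNth v₀ f : Fin (n+1) → V) (j.succ.succAbove k))
    = (if (k : ℕ) < (j : ℕ) + 1 then v₀ else f k)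
  rcases lt_trichotomy (k : ℕ) (j : ℕ) with h | h | h
  · simp [h, Nat.lt_succ_of_lt h]
  · have hkj : k = j := Fin.ext h
    subst hkj
    have h1 : k.succ.succAbove k = k.castSucc := by
      rw [Fin.succAbove_of_castSucc_lt]
      exact Fin.castSucc_lt_succ
    simp [h1]
  · have hnk : ¬ (k : ℕ) < (j : ℕ) := by omega
    have hnk1 : ¬ (k : ℕ) < (j : ℕ) + 1 := by omega
    have h1 : j.succ.succAbove k = k.succ := by
      rw [Fin.succAbove_of_le_castSucc]
      rw [Fin.le_castSucc_iff]
      simp only [Fin.lt_iff_val_lt_val, Fin.val_succ]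
      omega
    have h2 : j.castSucc.succAbove k = k.succ := by
      rw [Fin.succAbove_of_le_castSucc]
      simp only [Fin.le_iff_val_le_val, Fin.coe_castSucc]
      omega
    rw [if_neg hnk, if_neg hnk1, h1, ← h2, Fin.insertNth_apply_succAbove]

lemma insMap_vertex (K : ASC V) (n : ℕ) {v₀ : V} (hv : K.isVertex v₀)
    (j : Fin (n + 1)) {w : Fin n → V} (hw : (K.prodPow n).isVertex w) (i : Fin (n + 1)) :
    ({(j.insertNth v₀ w : Fin (n+1) → V) i} : Finset V) ∈ K.faces := by
  by_cases h : i = j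
  · subst h; simpa [ASC.isVertex] using hv
  · obtain ⟨k, rfl⟩ := Fin.exists_succAbove_eq h
    rw [Fin.insertNth_apply_succAbove]
    have := hw.2 k
    simpa using this

lemma scatle_iff_SDle (K : ASC V) (hK : K.EPConn) (n : ℕ) {v₀ : V}
    (hv : K.isVertex v₀) (k : ℕ) :
    scatle (K.prodPow n) k ↔ SDle (fun j : Fin (n + 1) => insMap K n hv j) k := by
  constructor
  · rintro ⟨Ω, hcov, hcat⟩
    refine ⟨Ω, hcov, fun j i i' => ?_⟩
    obtain ⟨w, hw, hc⟩ := hcat j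
    have hva : ∀ p : Fin (n+1),
        (K.prodPow (n+1)).isVertex (p.insertNth v₀ w : Fin (n+1) → V) :=
      fun p => ⟨Finset.singleton_nonempty _, fun i' => by
        simpa using insMap_vertex K n hv p hw i'⟩
    -- each insertion map restricted to `Ω j` is in the class of a constant map
    have key : ∀ p : Fin (n + 1),
        CClass ((insMap K n hv p).restrict (Ω j))
          (constMap (Ω j).1 (K.prodPow (n + 1)) (hva p)) := by
      intro p
      have h1 : (insMap K n hv p).restrict (Ω j)
          = (insMap K n hv p).comp (incl (Ω j)) := smap_ext rfl
      have h2 := cclass_comp_left (insMap K n hv p) hc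
      rw [h1]
      refine h2.trans ?_
      have h3 : (insMap K n hv p).comp (constMap (Ω j).1 (K.prodPow n) hw)
          = constMap (Ω j).1 (K.prodPow (n + 1)) (hva p) := smap_ext rfl
      rw [h3]
    have hmid : CClass
        (constMap (Ω j).1 (K.prodPow (n + 1)) (hva i))
        (constMap (Ω j).1 (K.prodPow (n + 1)) (hva i')) := by
      refine cclass_const (Ω j).1 ?_ (hva i) (hva i')
      exact prod_path hK (n+1) _ _ (insMap_vertex K n hv i hw) (insMap_vertex K n hv i' hw)
    exact ((key i).trans hmid).trans (cclass_symm (key i'))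
  · rintro ⟨Ω, hcov, hcc⟩
    refine ⟨Ω, hcov, fun j => ?_⟩
    -- show each `Ω j` is categorical at the vertex `fun _ => v₀`
    have hvert : (K.prodPow n).isVertex (fun _ : Fin n => v₀) :=
      ⟨Finset.singleton_nonempty _, fun i => by simpa [ASC.isVertex] using hv⟩
    refine ⟨fun _ => v₀, hvert, ?_⟩
    -- chain through the maps replacing initial segments by `v₀`
    have main : ∀ m : ℕ, m ≤ n →
        CClass ((repMap K n hv 0).comp (incl (Ω j)))
          ((repMap K n hv m).comp (incl (Ω j))) := by
      intro m hm
      induction m with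
      | zero => exact Relation.ReflTransGen.refl
      | succ m ih =>
        refine (ih (Nat.le_of_succ_le hm)).trans ?_
        set jf : Fin n := ⟨m, hm⟩ with hjf
        have h1 : (repMap K n hv m).comp (incl (Ω j))
            = (delMap K n hv jf).comp ((insMap K n hv jf.succ).restrict (Ω j)) := by
          refine smap_ext ?_
          show (repMap K n hv m).toFun ∘ (fun x => x)
            = (delMap K n hv jf).toFun ∘ (insMap K n hv jf.succ).toFun
          rw [delMap_comp_succ]
          rfl
        have h2 : (repMap K n hv (m+1)).comp (incl (Ω j))
            = (delMap K n hv jf).comp ((insMap K n hv jf.castSucc).restrict (Ω j)) := by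
          refine smap_ext ?_
          show (repMap K n hv (m+1)).toFun ∘ (fun x => x)
            = (delMap K n hv jf).toFun ∘ (insMap K n hv jf.castSucc).toFun
          rw [delMap_comp_castSucc]
          rfl
        rw [h1, h2]
        exact cclass_comp_left (delMap K n hv jf) (hcc j jf.succ jf.castSucc)
    have e0 : (repMap K n hv 0).comp (incl (Ω j)) = incl (Ω j) := by
      refine smap_ext ?_
      funext f k
      simp [repMap, SMap.comp, incl]
    have en : (repMap K n hv n).comp (incl (Ω j))
        = constMap (Ω j).1 (K.prodPow n) hvert := by
      refine smap_ext ?_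
      funext f k
      simp [repMap, SMap.comp, constMap, k.isLt]
    have := main n le_rfl
    rw [e0, en] at this
    exact this

end MainProof

/-- `scat(K^{n-1}) = SD(i₁,…,iₙ)` for the insertion maps. -/
theorem scat_prodPow_eq_SD_insMap {V : Type} [DecidableEq V] (K : ASC V)
    (hK : K.EPConn) (n : ℕ) {v₀ : V} (hv : K.isVertex v₀) :
    scat (K.prodPow n) = SD (fun j : Fin (n + 1) => insMap K n hv j) := by
  unfold scat SD
  congr 1
  ext m
  constructor
  · rintro ⟨k, rfl, h⟩
    exact ⟨k, rfl, (scatle_iff_SDle K hK n hv k).mp h⟩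
  · rintro ⟨k, rfl, h⟩
    exact ⟨k, rfl, (scatle_iff_SDle K hK n hv k).mpr h⟩
end
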